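/- arXiv:1407.6154 — 8 statements merged into one kernel-verified Lean document; each statement's English description precedes it below -/
import Mathlib

section
/- Let F ≥ 2 be a natural number and let γ be a real number with γ ≥ 2 + 1/√(F+1). Define a sequence (n_b) by n_1 = F + 1 and n_{b+1} = n_b + ⌈γ √(n_b)⌉. Then for every b ≥ 1, b ≤ √(n_b). -/
theorem stmt_0 (F : ℕ) (hF : 2 ≤ F) (γ : ℝ)
    (hγ : γ ≥ 2 + 1 / Real.sqrt ((F : ℝ) + 1))
    (n : ℕ → ℕ) (hn1 : n 1 = F + 1)
    (hrec : ∀ b ≥ 1, n (b + 1) = n b + ⌈γ * Real.sqrt ((n b : ℝ))⌉₊) :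
    ∀ b : ℕ, 1 ≤ b → (b : ℝ) ≤ Real.sqrt ((n b : ℝ)) := by
  have hFpos : (0:ℝ) < Real.sqrt ((F : ℝ) + 1) := by
    apply Real.sqrt_pos.mpr; positivity
  have key : ∀ b : ℕ, 1 ≤ b → F + 1 ≤ n b ∧ (b : ℝ) ≤ Real.sqrt ((n b : ℝ)) := by
    intro b hb
    induction b with
    | zero => omega
    | succ b ih =>
      rcases Nat.eq_or_lt_of_le hb with h1 | h1
      · constructor
        · rw [← h1, hn1]
        · rw [← h1]
          have : ((1:ℕ):ℝ) = 1 := by norm_num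
          rw [this]
          rw [show n 1 = F + 1 from hn1]
          rw [show (((F+1:ℕ)):ℝ) = (F:ℝ)+1 by push_cast; ring]
          nlinarith [Real.sq_sqrt (show (0:ℝ) ≤ (F:ℝ)+1 by positivity), hFpos,
            Real.sqrt_nonneg ((F:ℝ)+1)]
      · have hb1 : 1 ≤ b := by omega
        obtain ⟨hle, hsq⟩ := ih hb1
        have hrecb := hrec b hb1
        set s := Real.sqrt ((n b : ℝ)) with hs
        have hs0 : 0 ≤ s := Real.sqrt_nonneg _
        have hss : s ^ 2 = (n b : ℝ) := Real.sq_sqrt (by positivity)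
        have hFle : Real.sqrt ((F:ℝ)+1) ≤ s := by
          apply Real.sqrt_le_sqrt
          exact_mod_cast hle
        have hceil : γ * s ≤ (⌈γ * s⌉₊ : ℝ) := Nat.le_ceil _
        have hkey : ((b:ℝ)+1)^2 ≤ (n b : ℝ) + γ * s := by
          have h1s : 1 ≤ s / Real.sqrt ((F:ℝ)+1) :=
            (one_le_div hFpos).mpr hFle
          have hγs : (2 + 1 / Real.sqrt ((F:ℝ)+1)) * s ≤ γ * s :=
            mul_le_mul_of_nonneg_right hγ hs0
          have : (2 + 1 / Real.sqrt ((F:ℝ)+1)) * s = 2*s + s / Real.sqrt ((F:ℝ)+1) := by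
            field_simp
          nlinarith
        have hnb1 : ((n (b+1) : ℝ)) = (n b : ℝ) + (⌈γ * s⌉₊ : ℝ) := by
          rw [hrecb]; push_cast; ring
        constructor
        · have : (n b : ℝ) ≤ (n (b+1) : ℝ) := by
            rw [hnb1]; nlinarith [Nat.cast_nonneg (α := ℝ) ⌈γ * s⌉₊]
          have := (Nat.cast_le (α := ℝ)).mp this
          omega
        · have h2 : ((b:ℝ)+1)^2 ≤ ((n (b+1) : ℕ):ℝ) := by rw [hnb1]; nlinarith
          push_cast
          calc ((b:ℝ)+1) = Real.sqrt (((b:ℝ)+1)^2) := (Real.sqrt_sq (by positivity)).symm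
            _ ≤ _ := Real.sqrt_le_sqrt h2
  intro b hb
  exact (key b hb).2
end

section
/- Let F ≥ 2 be a natural number and γ ≥ 2 + 1/√(F+1). Define n_1 = F + 1, Δ(j) = ⌈γ √(n_j)⌉, and n_{j+1} = n_j + Δ(j). Then for every j ≥ 2, Δ(j)/n_j ≤ Δ(j-1)/n_{j-1}, i.e., the ratio of the gap length to the current time is nonincreasing. -/
set_option maxHeartbeats 1000000 in
theorem stmt_1 (F : ℕ) (hF : 2 ≤ F) (γ : ℝ)
    (hγ : γ ≥ 2 + 1 / Real.sqrt ((F : ℝ) + 1))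
    (n Δ : ℕ → ℕ) (hn1 : n 1 = F + 1)
    (hΔ : ∀ j ≥ 1, Δ j = ⌈γ * Real.sqrt (n j)⌉₊)
    (hrec : ∀ j ≥ 1, n (j + 1) = n j + Δ j) :
    ∀ j ≥ 2, (Δ j : ℝ) / (n j : ℝ) ≤ (Δ (j - 1) : ℝ) / (n (j - 1) : ℝ) := by
  have hnlb : ∀ k, 1 ≤ k → F + 1 ≤ n k := by
    intro k hk
    induction k with
    | zero => omega
    | succ k ih =>
      rcases Nat.eq_zero_or_pos k with rfl | hk1
      · simp [hn1]
      · rw [hrec k hk1]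
        have := ih hk1
        omega
  intro j hj
  obtain ⟨i, hi1, rfl⟩ : ∃ i, 1 ≤ i ∧ j = i + 1 := ⟨j - 1, by omega, by omega⟩
  have hsub : i + 1 - 1 = i := by omega
  rw [hsub]
  have hm : F + 1 ≤ n i := hnlb i hi1
  have hni1 : n (i + 1) = n i + Δ i := hrec i hi1
  have hΔi : Δ i = ⌈γ * Real.sqrt (n i)⌉₊ := hΔ i hi1
  have hΔi1 : Δ (i + 1) = ⌈γ * Real.sqrt (n (i + 1))⌉₊ := hΔ (i + 1) (by omega)
  set s := Real.sqrt (n i) with hs_def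
  set t := Real.sqrt (n (i + 1)) with ht_def
  have hmR : (3 : ℝ) ≤ (n i : ℝ) := by
    have : 3 ≤ n i := by omega
    exact_mod_cast this
  have hs1 : (1 : ℝ) < s := by
    rw [hs_def, show (1 : ℝ) = Real.sqrt 1 by simp]
    exact Real.sqrt_lt_sqrt (by norm_num) (by linarith)
  have hspos : (0 : ℝ) < s := by linarith
  have hsF : Real.sqrt ((F : ℝ) + 1) ≤ s := by
    rw [hs_def]
    exact Real.sqrt_le_sqrt (by exact_mod_cast hm)
  have hsFpos : 0 < Real.sqrt ((F : ℝ) + 1) := Real.sqrt_pos.mpr (by positivity)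
  have hγs : 2 + 1 / s ≤ γ := by
    have : 1 / s ≤ 1 / Real.sqrt ((F : ℝ) + 1) := one_div_le_one_div_of_le hsFpos hsF
    linarith
  have hγ2 : 2 ≤ γ := by
    have : 0 < 1 / s := by positivity
    linarith
  have hγ0 : 0 ≤ γ := by linarith
  have hs2 : s ^ 2 = (n i : ℝ) := by
    rw [hs_def]; exact Real.sq_sqrt (by positivity)
  have ht0 : 0 ≤ t := by rw [ht_def]; exact Real.sqrt_nonneg _
  have ht2 : t ^ 2 = (n i : ℝ) + (Δ i : ℝ) := by
    rw [ht_def, Real.sq_sqrt (by positivity), hni1]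
    push_cast; ring
  have hd_lb : γ * s ≤ (Δ i : ℝ) := by rw [hΔi]; exact Nat.le_ceil _
  have hd_ub : (Δ i : ℝ) ≤ γ * s + 1 := by
    rw [hΔi]
    exact (Nat.ceil_lt_add_one (mul_nonneg hγ0 (Real.sqrt_nonneg _))).le
  -- introduce u = 1/(2s) to keep things polynomial
  set u : ℝ := 1 / (2 * s) with hu_def
  have hu0 : 0 < u := by rw [hu_def]; positivity
  have hsu : 2 * s * u = 1 := by rw [hu_def]; field_simp
  have hγu : 2 + 2 * u ≤ γ := by
    have : 1 / s = 2 * u := by rw [hu_def]; field_simp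
    linarith [hγs, this ▸ hγs]
  have hc : t ≤ s + (γ / 2 + u) := by
    have h1 : (n (i + 1) : ℝ) ≤ (s + (γ / 2 + u)) ^ 2 := by
      have heq : (n (i + 1) : ℝ) = (n i : ℝ) + (Δ i : ℝ) := by
        rw [hni1]; push_cast; ring
      rw [heq, ← hs2]
      nlinarith [hd_ub, sq_nonneg (γ / 2 + u), hsu]
    calc t ≤ Real.sqrt ((s + (γ / 2 + u)) ^ 2) := by
            rw [ht_def]; exact Real.sqrt_le_sqrt h1
      _ = s + (γ / 2 + u) := Real.sqrt_sq (by positivity)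
  have hD1 : (Δ (i + 1) : ℝ) ≤ γ * t + 1 := by
    rw [hΔi1]
    exact (Nat.ceil_lt_add_one (mul_nonneg hγ0 ht0)).le
  have hMpos : (0 : ℝ) < (n i : ℝ) := by linarith
  have hNpos : (0 : ℝ) < (n (i + 1) : ℝ) := by
    have : 0 < n (i + 1) := by rw [hni1]; omega
    exact_mod_cast this
  have key : (γ * t + 1) / (n (i + 1) : ℝ) ≤ (Δ i : ℝ) / (n i : ℝ) := by
    rw [div_le_div_iff₀ hNpos hMpos]
    have hNeq : (n (i + 1) : ℝ) = t ^ 2 := by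
      rw [ht2, hni1]; push_cast; ring
    rw [hNeq, ← hs2]
    nlinarith [mul_nonneg (sub_nonneg.2 hd_lb) (sq_nonneg t),
      mul_nonneg (mul_nonneg hγ0 hspos.le) (sub_nonneg.2 hd_lb),
      mul_nonneg (mul_nonneg hγ0 (sq_nonneg s)) (sub_nonneg.2 hc),
      mul_nonneg (mul_nonneg hγ0 hspos.le) (sub_nonneg.2 hγu),
      hsu, hs1, hu0, ht2]
  calc (Δ (i + 1) : ℝ) / (n (i + 1) : ℝ)
      ≤ (γ * t + 1) / (n (i + 1) : ℝ) := div_le_div_of_nonneg_right hD1 hNpos.le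
    _ ≤ (Δ i : ℝ) / (n i : ℝ) := key
end

section
/- Let F ≥ 2, γ ≥ 2 + 1/√(F+1), and let n_{j-1} ≥ F+1 and Δ(j-1) ≥ 1 satisfy γ√(n_{j-1}) ≤ Δ(j-1) ≤ γ√(n_{j-1}) + 1. Then γ√(n_{j-1} + Δ(j-1)) ≤ Δ(j-1) + Δ(j-1)²/n_{j-1} − 1. -/
theorem stmt_3 (F : ℕ) (hF : 2 ≤ F) (γ n Δ : ℝ)
    (hγ : γ ≥ 2 + 1 / Real.sqrt ((F : ℝ) + 1))
    (hn : n ≥ (F : ℝ) + 1)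
    (hΔ1 : γ * Real.sqrt n ≤ Δ) (hΔ2 : Δ ≤ γ * Real.sqrt n + 1) :
    γ * Real.sqrt (n + Δ) ≤ Δ + Δ ^ 2 / n - 1 := by
  have hF3 : (3:ℝ) ≤ (F:ℝ) + 1 := by
    have : (2:ℕ) ≤ F := hF
    have : (2:ℝ) ≤ (F:ℝ) := by exact_mod_cast this
    linarith
  have hn0 : (0:ℝ) < n := by linarith
  have hγ2 : (2:ℝ) ≤ γ := by
    have h0 : 0 ≤ 1 / Real.sqrt ((F : ℝ) + 1) := by positivity
    linarith
  set s := Real.sqrt n with hs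
  have hs0 : 0 ≤ s := Real.sqrt_nonneg n
  have hsn : s ^ 2 = n := Real.sq_sqrt hn0.le
  have hs1 : (1:ℝ) ≤ s := by nlinarith
  have hΔ0 : 0 ≤ Δ := by nlinarith
  have ht : γ ^ 2 ≤ Δ ^ 2 / n := by
    rw [le_div_iff₀ hn0]
    nlinarith [mul_nonneg (sub_nonneg.2 hΔ1) (show 0 ≤ Δ + γ * s by nlinarith)]
  have hlow : γ * s + γ ^ 2 - 1 ≤ Δ + Δ ^ 2 / n - 1 := by linarith
  have hlow0 : (0:ℝ) ≤ γ * s + γ ^ 2 - 1 := by nlinarith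
  have hkey : γ ^ 2 * (n + Δ) ≤ (Δ + Δ ^ 2 / n - 1) ^ 2 := by
    have hA : 0 ≤ γ * s * (γ ^ 2 - 2) := by
      apply mul_nonneg (mul_nonneg (by linarith) hs0); nlinarith
    have hB : 0 ≤ γ ^ 4 - 3 * γ ^ 2 + 1 := by nlinarith [sq_nonneg (γ ^ 2 - 2), sq_nonneg (γ - 2)]
    have hC : γ ^ 2 * Δ ≤ γ ^ 2 * (γ * s + 1) :=
      mul_le_mul_of_nonneg_left hΔ2 (sq_nonneg γ)
    have h1 : γ ^ 2 * (n + Δ) ≤ (γ * s + γ ^ 2 - 1) ^ 2 := by nlinarith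
    have h2 : (γ * s + γ ^ 2 - 1) ^ 2 ≤ (Δ + Δ ^ 2 / n - 1) ^ 2 := by
      apply pow_le_pow_left₀ hlow0 hlow
    linarith
  have hnd : 0 ≤ n + Δ := by linarith
  calc γ * Real.sqrt (n + Δ) = Real.sqrt (γ ^ 2 * (n + Δ)) := by
        rw [Real.sqrt_mul (by positivity), Real.sqrt_sq (by linarith)]
    _ ≤ Real.sqrt ((Δ + Δ ^ 2 / n - 1) ^ 2) := Real.sqrt_le_sqrt hkey
    _ = Δ + Δ ^ 2 / n - 1 := Real.sqrt_sq (by linarith)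
end

section
/- Let F ≥ 2 be a natural number and let γ satisfy 2 + 1/√(F+1) ≤ γ ≤ (F² + F − 1)/√(F+1). Define n_1 = F + 1, Δ(j) = ⌈γ √(n_j)⌉, and n_{j+1} = n_j + Δ(j). Then for every b ≥ 1, ∑_{j=1}^{b} log(1 + Δ(j)/n_j) ≤ log(n_b). -/
theorem stmt_4 (F : ℕ) (hF : 2 ≤ F) (γ : ℝ)
    (hγl : 2 + 1 / Real.sqrt ((F : ℝ) + 1) ≤ γ)
    (hγu : γ ≤ ((F : ℝ) ^ 2 + (F : ℝ) - 1) / Real.sqrt ((F : ℝ) + 1))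
    (n Δ : ℕ → ℕ) (hn1 : n 1 = F + 1)
    (hΔ : ∀ j ≥ 1, Δ j = ⌈γ * Real.sqrt (n j)⌉₊)
    (hrec : ∀ j ≥ 1, n (j + 1) = n j + Δ j) :
    ∀ b ≥ 1, ∑ j ∈ Finset.Icc 1 b, Real.log (1 + (Δ j : ℝ) / (n j : ℝ))
      ≤ Real.log (n b : ℝ) := by
  have hF2 : (2:ℝ) ≤ (F:ℝ) := by exact_mod_cast hF
  have hs : 0 < Real.sqrt ((F:ℝ)+1) := Real.sqrt_pos.mpr (by positivity)
  have hγ0 : 0 ≤ γ := le_trans (by positivity) hγl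
  -- n j ≥ F + 1 for j ≥ 1
  have hnge : ∀ j, 1 ≤ j → F + 1 ≤ n j := by
    intro j hj
    induction j with
    | zero => omega
    | succ k ih =>
      rcases Nat.eq_zero_or_pos k with hk | hk
      · subst hk; rw [hn1]
      · have := ih hk
        rw [hrec k hk]; omega
  have hnpos : ∀ j, 1 ≤ j → (0:ℝ) < (n j : ℝ) := by
    intro j hj
    have := hnge j hj
    have : 0 < n j := by omega
    exact_mod_cast this
  -- key bound: Δ j < F * n j
  have key : ∀ j, 1 ≤ j → (Δ j : ℝ) < (F:ℝ) * (n j : ℝ) := by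
    intro j hj
    have hN : ((F:ℝ)+1) ≤ (n j : ℝ) := by exact_mod_cast hnge j hj
    have hN0 : (0:ℝ) < (n j : ℝ) := hnpos j hj
    have hceil : (Δ j : ℝ) < γ * Real.sqrt (n j : ℝ) + 1 := by
      rw [hΔ j hj]
      exact Nat.ceil_lt_add_one (by positivity)
    have hsqrt : Real.sqrt (n j : ℝ) / Real.sqrt ((F:ℝ)+1)
        ≤ (n j : ℝ) / ((F:ℝ)+1) := by
      rw [← Real.sqrt_div (by positivity)]
      have h1 : 1 ≤ (n j : ℝ) / ((F:ℝ)+1) := by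
        rw [le_div_iff₀ (by positivity)]; linarith
      calc Real.sqrt ((n j : ℝ) / ((F:ℝ)+1))
          ≤ Real.sqrt (((n j : ℝ) / ((F:ℝ)+1))^2) :=
            Real.sqrt_le_sqrt (by nlinarith)
        _ = (n j : ℝ) / ((F:ℝ)+1) := Real.sqrt_sq (by linarith)
    have hC0 : (0:ℝ) ≤ (F:ℝ)^2 + (F:ℝ) - 1 := by nlinarith
    have h2 : γ * Real.sqrt (n j : ℝ)
        ≤ ((F:ℝ)^2 + (F:ℝ) - 1) * ((n j : ℝ) / ((F:ℝ)+1)) := by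
      calc γ * Real.sqrt (n j : ℝ)
          ≤ (((F:ℝ)^2 + (F:ℝ) - 1) / Real.sqrt ((F:ℝ)+1)) * Real.sqrt (n j : ℝ) :=
            mul_le_mul_of_nonneg_right hγu (Real.sqrt_nonneg _)
        _ = ((F:ℝ)^2 + (F:ℝ) - 1) * (Real.sqrt (n j : ℝ) / Real.sqrt ((F:ℝ)+1)) := by
            ring
        _ ≤ ((F:ℝ)^2 + (F:ℝ) - 1) * ((n j : ℝ) / ((F:ℝ)+1)) :=
            mul_le_mul_of_nonneg_left hsqrt hC0
    set D : ℝ := (n j : ℝ) / ((F:ℝ)+1) with hD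
    have hDN : D * ((F:ℝ)+1) = (n j : ℝ) := by
      rw [hD]; exact div_mul_cancel₀ _ (by positivity)
    have hD1 : 1 ≤ D := by
      rw [hD, le_div_iff₀ (by positivity)]; linarith
    nlinarith [hceil, h2, hDN, hD1]
  -- each term is a log difference
  have hterm : ∀ j, 1 ≤ j →
      Real.log (1 + (Δ j : ℝ) / (n j : ℝ))
        = Real.log (n (j+1) : ℝ) - Real.log (n j : ℝ) := by
    intro j hj
    have hN0 : (0:ℝ) < (n j : ℝ) := hnpos j hj
    have hN10 : (0:ℝ) < (n (j+1) : ℝ) := by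
      rw [hrec j hj]; push_cast
      have : (0:ℝ) ≤ (Δ j : ℝ) := by positivity
      linarith
    have heq : 1 + (Δ j : ℝ) / (n j : ℝ) = (n (j+1) : ℝ) / (n j : ℝ) := by
      rw [hrec j hj]; push_cast; field_simp
    rw [heq, Real.log_div hN10.ne' hN0.ne']
  -- telescoping
  have htel : ∀ b, 1 ≤ b →
      ∑ j ∈ Finset.Icc 1 b, Real.log (1 + (Δ j : ℝ) / (n j : ℝ))
        = Real.log (n (b+1) : ℝ) - Real.log (n 1 : ℝ) := by
    intro b hb
    induction b, hb using Nat.le_induction with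
    | base => simp [hterm 1 le_rfl]
    | succ k hk ih =>
      rw [Finset.sum_Icc_succ_top (by omega), ih, hterm (k+1) (by omega)]
      ring
  intro b hb
  rw [htel b hb]
  have hN0 : (0:ℝ) < (n b : ℝ) := hnpos b hb
  have h1 : (n (b+1) : ℝ) ≤ (n 1 : ℝ) * (n b : ℝ) := by
    rw [hrec b hb, hn1]
    push_cast
    have := key b hb
    nlinarith
  have hN10 : (0:ℝ) < (n (b+1) : ℝ) := by
    rw [hrec b hb]; push_cast
    have : (0:ℝ) ≤ (Δ b : ℝ) := by positivity
    linarith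
  have h2 : Real.log (n (b+1) : ℝ) ≤ Real.log (n 1 : ℝ) + Real.log (n b : ℝ) := by
    have hn1pos : (0:ℝ) < (n 1 : ℝ) := hnpos 1 le_rfl
    calc Real.log (n (b+1) : ℝ) ≤ Real.log ((n 1 : ℝ) * (n b : ℝ)) :=
          Real.log_le_log hN10 h1
      _ = Real.log (n 1 : ℝ) + Real.log (n b : ℝ) :=
          Real.log_mul hn1pos.ne' hN0.ne'
  linarith
end

section
/- Let F ≥ 2 and γ ≥ 2 + 1/√(F+1), with n_1 = F+1, Δ(j) = ⌈γ√(n_j)⌉, n_{j+1} = n_j + Δ(j). Then for every b ≥ 2, ∑_{j=2}^{b} (n_j/n_{j-1} − 1) ≤ γ(1 + (1/2) log(n_b)) + π²/6. -/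
open Finset Real

lemma harm_le (m : ℕ) (hm : 1 ≤ m) :
    ∑ k ∈ Finset.Icc 1 m, (1 : ℝ) / k ≤ 1 + Real.log m := by
  induction m, hm using Nat.le_induction with
  | base => simp
  | succ m hm ih =>
    rw [Finset.sum_Icc_succ_top (by omega)]
    have hlog : (1 : ℝ) / (m + 1) ≤ Real.log (m + 1) - Real.log m := by
      have hm0 : (0 : ℝ) < m := by exact_mod_cast hm
      have h1 : Real.log ((m : ℝ) / (m + 1)) ≤ (m : ℝ) / (m + 1) - 1 :=
        Real.log_le_sub_one_of_pos (by positivity)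
      rw [Real.log_div (by positivity) (by positivity)] at h1
      have : (m : ℝ) / (m + 1) - 1 = -(1 / (m + 1)) := by field_simp; ring
      rw [this] at h1
      linarith
    push_cast
    linarith

lemma basel_le (m : ℕ) :
    ∑ k ∈ Finset.Icc 1 m, (1 : ℝ) / (k : ℝ) ^ 2 ≤ Real.pi ^ 2 / 6 := by
  exact sum_le_hasSum _ (fun i _ => by positivity) hasSum_zeta_two

theorem stmt_6 (F : ℕ) (hF : 2 ≤ F) (γ : ℝ)
    (hγ : γ ≥ 2 + 1 / Real.sqrt ((F : ℝ) + 1))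
    (n Δ : ℕ → ℕ) (hn1 : n 1 = F + 1)
    (hΔ : ∀ j ≥ 1, Δ j = ⌈γ * Real.sqrt (n j)⌉₊)
    (hrec : ∀ j ≥ 1, n (j + 1) = n j + Δ j)
    (b : ℕ) (hb : 2 ≤ b) :
    ∑ j ∈ Finset.Icc 2 b, ((n j : ℝ) / (n (j - 1) : ℝ) - 1)
      ≤ γ * (1 + Real.log (Real.sqrt (n b : ℝ))) + Real.pi ^ 2 / 6 := by
  have hsF : (0 : ℝ) < Real.sqrt ((F : ℝ) + 1) := Real.sqrt_pos.mpr (by positivity)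
  have hγ0 : (0 : ℝ) < γ := lt_of_lt_of_le (by positivity) hγ
  -- Property: F + 1 ≤ n j and j^2 ≤ n j for all j ≥ 1
  have key : ∀ j, 1 ≤ j → F + 1 ≤ n j ∧ j ^ 2 ≤ n j := by
    intro j hj
    induction j, hj using Nat.le_induction with
    | base => rw [hn1]; omega
    | succ j hj ih =>
      obtain ⟨h1, h2⟩ := ih
      have hnjpos : (0 : ℝ) < (n j : ℝ) := by
        have : 0 < n j := by omega
        exact_mod_cast this
      have hsq1 : (j : ℝ) ≤ Real.sqrt (n j) := by
        rw [show (j : ℝ) = Real.sqrt ((j : ℝ) ^ 2) by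
          rw [Real.sqrt_sq (by positivity)]]
        exact Real.sqrt_le_sqrt (by exact_mod_cast h2)
      have hsq2 : Real.sqrt ((F : ℝ) + 1) ≤ Real.sqrt (n j) :=
        Real.sqrt_le_sqrt (by exact_mod_cast h1)
      have hΔbig : (2 * j + 1 : ℝ) ≤ (Δ j : ℝ) := by
        rw [hΔ j hj]
        have h3 : γ * Real.sqrt (n j) ≤ (⌈γ * Real.sqrt (n j)⌉₊ : ℝ) :=
          Nat.le_ceil _
        have h4 : (2 * j + 1 : ℝ) ≤ γ * Real.sqrt (n j) := by
          have := mul_le_mul hγ hsq1 (by positivity) (le_of_lt hγ0)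
          have h5 : 1 ≤ 1 / Real.sqrt ((F : ℝ) + 1) * Real.sqrt (n j) := by
            rw [div_mul_eq_mul_div, one_mul, le_div_iff₀ hsF, one_mul]
            exact hsq2
          nlinarith
        linarith
      have hΔnat : 2 * j + 1 ≤ Δ j := by exact_mod_cast hΔbig
      rw [hrec j hj]
      constructor
      · omega
      · nlinarith
  -- termwise bound
  have term_bound : ∀ j ∈ Finset.Icc 2 b,
      (n j : ℝ) / (n (j - 1) : ℝ) - 1 ≤ γ / ((j : ℝ) - 1) + 1 / ((j : ℝ) - 1) ^ 2 := by
    intro j hj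
    rw [Finset.mem_Icc] at hj
    obtain ⟨hj2, hjb⟩ := hj
    have hjm1 : 1 ≤ j - 1 := by omega
    obtain ⟨hm1, hm2⟩ := key (j - 1) hjm1
    have hmpos : (0 : ℝ) < (n (j - 1) : ℝ) := by
      have : 0 < n (j - 1) := by omega
      exact_mod_cast this
    have hjcast : ((j - 1 : ℕ) : ℝ) = (j : ℝ) - 1 := by
      push_cast [Nat.cast_sub (by omega : 1 ≤ j)]; ring
    have hj1pos : (0 : ℝ) < (j : ℝ) - 1 := by
      have : (1 : ℝ) ≤ (j : ℝ) - 1 := by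
        rw [← hjcast]; exact_mod_cast hjm1
      linarith
    have hsq : (j : ℝ) - 1 ≤ Real.sqrt (n (j - 1)) := by
      rw [show (j : ℝ) - 1 = Real.sqrt (((j : ℝ) - 1) ^ 2) by
        rw [Real.sqrt_sq (le_of_lt hj1pos)]]
      apply Real.sqrt_le_sqrt
      rw [← hjcast]
      exact_mod_cast hm2
    have hrecj : (n j : ℝ) = (n (j - 1) : ℝ) + (Δ (j - 1) : ℝ) := by
      have := hrec (j - 1) hjm1
      rw [show j - 1 + 1 = j by omega] at this
      exact_mod_cast this
    have hΔub : (Δ (j - 1) : ℝ) ≤ γ * Real.sqrt (n (j - 1)) + 1 := by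
      rw [hΔ (j - 1) hjm1]
      exact le_of_lt (Nat.ceil_lt_add_one (by positivity))
    have hsqn : Real.sqrt (n (j - 1)) ^ 2 = (n (j - 1) : ℝ) :=
      Real.sq_sqrt (le_of_lt hmpos)
    have hsqpos : (0 : ℝ) < Real.sqrt (n (j - 1)) := lt_of_lt_of_le hj1pos hsq
    have e1 : (n j : ℝ) / (n (j - 1) : ℝ) - 1 = (Δ (j - 1) : ℝ) / (n (j - 1) : ℝ) := by
      rw [hrecj]; field_simp; ring
    rw [e1]
    have e2 : (Δ (j - 1) : ℝ) / (n (j - 1) : ℝ)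
        ≤ γ / Real.sqrt (n (j - 1)) + 1 / (n (j - 1) : ℝ) := by
      rw [div_add_div _ _ (ne_of_gt hsqpos) (ne_of_gt hmpos), div_le_div_iff₀ hmpos (by positivity)]
      have hX : (γ * Real.sqrt (n (j - 1)) + 1) * (Real.sqrt (n (j - 1)) * (n (j - 1)))
          = (γ * (n (j - 1)) + Real.sqrt (n (j - 1)) * 1) * (n (j - 1)) := by
        linear_combination γ * ((n (j - 1) : ℝ)) * hsqn
      have hY := mul_le_mul_of_nonneg_right hΔub
        (by positivity : (0:ℝ) ≤ Real.sqrt (n (j - 1)) * (n (j - 1)))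
      linarith
    have e3 : γ / Real.sqrt (n (j - 1)) ≤ γ / ((j : ℝ) - 1) :=
      div_le_div_of_nonneg_left (le_of_lt hγ0) hj1pos hsq
    have e4 : 1 / (n (j - 1) : ℝ) ≤ 1 / ((j : ℝ) - 1) ^ 2 := by
      apply div_le_div_of_nonneg_left one_pos.le (by positivity)
      nlinarith
    linarith
  calc ∑ j ∈ Finset.Icc 2 b, ((n j : ℝ) / (n (j - 1) : ℝ) - 1)
      ≤ ∑ j ∈ Finset.Icc 2 b, (γ / ((j : ℝ) - 1) + 1 / ((j : ℝ) - 1) ^ 2) :=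
        Finset.sum_le_sum term_bound
    _ = ∑ k ∈ Finset.Icc 1 (b - 1), (γ / (k : ℝ) + 1 / (k : ℝ) ^ 2) := by
        apply Finset.sum_nbij' (fun j => j - 1) (fun k => k + 1)
        all_goals intro a ha
        all_goals simp only [Finset.mem_Icc] at *
        · omega
        · omega
        · omega
        · omega
        · have : ((a - 1 : ℕ) : ℝ) = (a : ℝ) - 1 := by
            push_cast [Nat.cast_sub (by omega : 1 ≤ a)]; ring
          rw [this]
    _ = γ * ∑ k ∈ Finset.Icc 1 (b - 1), (1 : ℝ) / (k : ℝ)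
          + ∑ k ∈ Finset.Icc 1 (b - 1), (1 : ℝ) / (k : ℝ) ^ 2 := by
        rw [Finset.sum_add_distrib, Finset.mul_sum]
        congr 1
        apply Finset.sum_congr rfl
        intro k _
        rw [mul_one_div]
    _ ≤ γ * (1 + Real.log (Real.sqrt (n b : ℝ))) + Real.pi ^ 2 / 6 := by
        have h1 := harm_le (b - 1) (by omega)
        have h2 := basel_le (b - 1)
        have hlogle : Real.log ((b - 1 : ℕ) : ℝ) ≤ Real.log (Real.sqrt (n b : ℝ)) := by
          apply Real.log_le_log (by exact_mod_cast (by omega : 0 < b - 1))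
          have hb2 : b ^ 2 ≤ n b := (key b (by omega)).2
          have : ((b - 1 : ℕ) : ℝ) ≤ (b : ℝ) := by exact_mod_cast Nat.sub_le b 1
          have hbs : (b : ℝ) ≤ Real.sqrt (n b) := by
            rw [show (b : ℝ) = Real.sqrt ((b : ℝ) ^ 2) by
              rw [Real.sqrt_sq (by positivity)]]
            exact Real.sqrt_le_sqrt (by exact_mod_cast hb2)
          linarith
        have h3 : ∑ k ∈ Finset.Icc 1 (b - 1), (1 : ℝ) / (k : ℝ)
            ≤ 1 + Real.log (Real.sqrt (n b : ℝ)) := by linarith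
        have h4 := mul_le_mul_of_nonneg_left h3 (le_of_lt hγ0)
        linarith
end

section
/- Let F ≥ 2 and γ ≥ 2 + 1/√(F+1), with n_1 = F+1, Δ(j) = ⌈γ√(n_j)⌉, n_{j+1} = n_j + Δ(j). Then K₁ := 2∑_{j=1}^{∞} Δ(j)/n_j² converges and satisfies K₁ ≤ π²/3 + 4.12·γ. -/
theorem stmt_12 (F : ℕ) (hF : 2 ≤ F) (γ : ℝ)
    (hγ : γ ≥ 2 + 1 / Real.sqrt ((F : ℝ) + 1))
    (n Δ : ℕ → ℕ) (hn1 : n 1 = F + 1)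
    (hΔ : ∀ j ≥ 1, Δ j = ⌈γ * Real.sqrt (n j)⌉₊)
    (hrec : ∀ j ≥ 1, n (j + 1) = n j + Δ j) :
    Summable (fun j : ℕ => 2 * (Δ (j + 1) : ℝ) / (n (j + 1) : ℝ) ^ 2) ∧
    ∑' j : ℕ, 2 * (Δ (j + 1) : ℝ) / (n (j + 1) : ℝ) ^ 2
      ≤ Real.pi ^ 2 / 3 + 4.12 * γ := by
  have hFpos : (0:ℝ) < Real.sqrt ((F : ℝ) + 1) := by positivity
  have hγ2 : (2:ℝ) ≤ γ := le_trans (le_add_of_nonneg_right (by positivity)) hγ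
  have hγ0 : (0:ℝ) ≤ γ := by linarith
  -- key growth facts
  have key : ∀ j, 1 ≤ j → F + 1 ≤ n j ∧ j ^ 2 ≤ n j := by
    intro j hj
    induction j with
    | zero => omega
    | succ k ih =>
      rcases Nat.eq_or_lt_of_le hj with h | h
      · have : k = 0 := by omega
        subst this
        rw [hn1]
        refine ⟨le_refl _, ?_⟩
        nlinarith
      · have hk : 1 ≤ k := by omega
        obtain ⟨h1, h2⟩ := ih hk
        have hs1 : (k : ℝ) ≤ Real.sqrt (n k) := by
          rw [Real.le_sqrt (by positivity) (by positivity)]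
          exact_mod_cast h2
        have hs2 : Real.sqrt ((F : ℝ) + 1) ≤ Real.sqrt (n k) := by
          apply Real.sqrt_le_sqrt
          exact_mod_cast h1
        have hdiv : (1:ℝ) ≤ Real.sqrt (n k) / Real.sqrt ((F:ℝ) + 1) :=
          (one_le_div hFpos).mpr hs2
        have hlow : (2 * k + 1 : ℝ) ≤ γ * Real.sqrt (n k) := by
          have hmul : (2 + 1 / Real.sqrt ((F:ℝ) + 1)) * Real.sqrt (n k)
              ≤ γ * Real.sqrt (n k) :=
            mul_le_mul_of_nonneg_right hγ (Real.sqrt_nonneg _)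
          have hexp : (2 * k + 1 : ℝ) ≤ (2 + 1 / Real.sqrt ((F:ℝ) + 1)) * Real.sqrt (n k) := by
            have : (1 / Real.sqrt ((F:ℝ) + 1)) * Real.sqrt (n k)
                = Real.sqrt (n k) / Real.sqrt ((F:ℝ) + 1) := by ring
            nlinarith [hs1, hdiv]
          linarith
        have hΔge : 2 * k + 1 ≤ Δ k := by
          have hceil := Nat.le_ceil (γ * Real.sqrt (n k))
          have : (2 * k + 1 : ℝ) ≤ (⌈γ * Real.sqrt (n k)⌉₊ : ℝ) := le_trans hlow hceil
          rw [hΔ k hk]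
          exact_mod_cast this
        have hr := hrec k hk
        constructor
        · omega
        · have : (k + 1) ^ 2 = k ^ 2 + (2 * k + 1) := by ring
          omega
  -- termwise bound
  have hb : ∀ j : ℕ, 2 * (Δ (j + 1) : ℝ) / (n (j + 1) : ℝ) ^ 2
      ≤ (2 * γ + 2) * (1 / ((j + 1 : ℕ) : ℝ) ^ 2) := by
    intro j
    obtain ⟨h1, h2⟩ := key (j + 1) (by omega)
    have hm1 : 1 ≤ n (j + 1) := by nlinarith
    have hn1' : (1:ℝ) ≤ (n (j + 1) : ℝ) := by exact_mod_cast hm1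
    have hnpos : (0:ℝ) < (n (j + 1) : ℝ) := by linarith
    have hΔle : (Δ (j + 1) : ℝ) ≤ γ * Real.sqrt (n (j + 1)) + 1 := by
      rw [hΔ (j + 1) (by omega)]
      exact (Nat.ceil_lt_add_one (by positivity)).le
    have hsle : Real.sqrt (n (j + 1)) ≤ (n (j + 1) : ℝ) := by
      nlinarith [Real.sq_sqrt hnpos.le, Real.sqrt_nonneg ((n (j+1) : ℝ))]
    have hΔn : (Δ (j + 1) : ℝ) ≤ (γ + 1) * (n (j + 1) : ℝ) := by
      nlinarith
    have hcast : ((j + 1 : ℕ) : ℝ) ^ 2 ≤ (n (j + 1) : ℝ) := by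
      exact_mod_cast h2
    have hjpos : (0:ℝ) < ((j + 1 : ℕ) : ℝ) ^ 2 := by positivity
    calc 2 * (Δ (j + 1) : ℝ) / (n (j + 1) : ℝ) ^ 2
        ≤ 2 * ((γ + 1) * (n (j + 1) : ℝ)) / (n (j + 1) : ℝ) ^ 2 := by gcongr
      _ = (2 * γ + 2) / (n (j + 1) : ℝ) := by field_simp
      _ ≤ (2 * γ + 2) / ((j + 1 : ℕ) : ℝ) ^ 2 := by
          exact div_le_div_of_nonneg_left (by linarith) hjpos hcast
      _ = (2 * γ + 2) * (1 / ((j + 1 : ℕ) : ℝ) ^ 2) := by ring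
  have hf0 : ∀ j : ℕ, 0 ≤ 2 * (Δ (j + 1) : ℝ) / (n (j + 1) : ℝ) ^ 2 := fun j => by positivity
  have hgsum : Summable (fun j : ℕ => (2 * γ + 2) * (1 / ((j + 1 : ℕ) : ℝ) ^ 2)) := by
    apply Summable.mul_left
    have h1 : Summable (fun n : ℕ => 1 / (n : ℝ) ^ 2) :=
      Real.summable_one_div_nat_pow.mpr one_lt_two
    exact (summable_nat_add_iff (f := fun n : ℕ => 1 / (n : ℝ) ^ 2) 1).mpr h1
  have hfsum : Summable (fun j : ℕ => 2 * (Δ (j + 1) : ℝ) / (n (j + 1) : ℝ) ^ 2) :=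
    Summable.of_nonneg_of_le hf0 hb hgsum
  refine ⟨hfsum, ?_⟩
  have htle := Summable.tsum_le_tsum hb hfsum hgsum
  have hbasel : ∑' j : ℕ, (1 : ℝ) / ((j + 1 : ℕ) : ℝ) ^ 2 = Real.pi ^ 2 / 6 := by
    have h := hasSum_zeta_two.tsum_eq
    rw [Summable.tsum_eq_zero_add hasSum_zeta_two.summable] at h
    simpa using h
  have hgt : ∑' j : ℕ, (2 * γ + 2) * (1 / ((j + 1 : ℕ) : ℝ) ^ 2)
      = (2 * γ + 2) * (Real.pi ^ 2 / 6) := by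
    rw [tsum_mul_left, hbasel]
  rw [hgt] at htle
  have hpi : Real.pi ^ 2 ≤ 12.36 := by
    nlinarith [Real.pi_lt_d2, Real.pi_gt_three]
  nlinarith [htle, hγ2, hpi, Real.pi_pos]
end

section
/- If a ≥ 0 and a real number Δ satisfies c√n ≤ Δ ≤ c√n + 1 with c ≥ 2 and n ≥ 1, then Δ² ≥ c²n, 2Δ³/n ≥ 2c³√n − 6c² (a lower bound derived from the binomial expansion), and in particular Δ² + Δ⁴/n² − 2Δ²/n + 2Δ³/n − 2Δ + 1 ≥ c⁴ + 2c(c²−1)√n + c²(n−2) − 4c/√n − 2/n − 1. -/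
theorem stmt_13 (c n Δ : ℝ) (hc : 2 ≤ c) (hn : 1 ≤ n)
    (hΔ1 : c * Real.sqrt n ≤ Δ) (hΔ2 : Δ ≤ c * Real.sqrt n + 1) :
    Δ ^ 2 + Δ ^ 4 / n ^ 2 - 2 * Δ ^ 2 / n + 2 * Δ ^ 3 / n - 2 * Δ + 1
      ≥ c ^ 4 + 2 * c * (c ^ 2 - 1) * Real.sqrt n + c ^ 2 * (n - 2)
        - 4 * c / Real.sqrt n - 2 / n - 1 := by
  have hn0 : (0:ℝ) < n := by linarith
  set s := Real.sqrt n with hsdef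
  have hs2 : s ^ 2 = n := Real.sq_sqrt hn0.le
  have hs1 : 1 ≤ s := by nlinarith [Real.sqrt_nonneg n]
  have hs0 : (0:ℝ) < s := by linarith
  have hcs : 2 ≤ c * s := by nlinarith
  have p2 : (c*s)^2 ≤ Δ^2 := by nlinarith
  have p3 : (c*s)^3 ≤ Δ^3 := by nlinarith [p2]
  have p4 : (c*s)^4 ≤ Δ^4 := by nlinarith [p2]
  have e1 : Δ ^ 4 / n ^ 2 ≥ c ^ 4 := by
    rw [ge_iff_le, le_div_iff₀ (by positivity), ← hs2]
    nlinarith [p4]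
  have e2 : 2 * Δ ^ 3 / n ≥ 2 * c ^ 3 * s := by
    rw [ge_iff_le, le_div_iff₀ hn0, ← hs2]
    nlinarith [p3]
  have e3 : 2 * Δ ^ 2 / n ≤ 2 * c ^ 2 + 4 * c / s + 2 / n := by
    rw [div_le_iff₀ hn0]
    have h4 : 4 * c / s * n = 4 * c * s := by
      field_simp; nlinarith
    have h5 : 2 / n * n = 2 := by field_simp
    nlinarith
  have e4 : Δ ^ 2 - 2 * Δ + 1 ≥ c ^ 2 * n - 2 * c * s + 1 := by
    nlinarith
  nlinarith [e1, e2, e3, e4]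
end

section
/- Let F ≥ 2 and 2 + 1/√(F+1) ≤ γ ≤ (F²+F−1)/√(F+1). With n_1 = F+1, Δ(j) = ⌈γ√(n_j)⌉, n_{j+1} = n_j + Δ(j), and l_t = c·log t for c > 0, one has l_{n_{b+1}}/Δ(b) + ∑_{j=2}^{b} l_{n_j}·(1/Δ(j−1) − 1/Δ(j)) ≤ c·(log(F+1)/⌈γ√(F+1)⌉ + log(n_b)). -/
theorem stmt_18 (F : ℕ) (hF : 2 ≤ F) (γ : ℝ)
    (hγl : 2 + 1 / Real.sqrt ((F : ℝ) + 1) ≤ γ)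
    (hγu : γ ≤ ((F : ℝ) ^ 2 + (F : ℝ) - 1) / Real.sqrt ((F : ℝ) + 1))
    (c : ℝ) (hc : 0 < c)
    (n Δ : ℕ → ℕ) (hn1 : n 1 = F + 1)
    (hΔ : ∀ j ≥ 1, Δ j = ⌈γ * Real.sqrt (n j)⌉₊)
    (hrec : ∀ j ≥ 1, n (j + 1) = n j + Δ j)
    (b : ℕ) (hb : 1 ≤ b) :
    c * Real.log (n (b + 1) : ℝ) / (Δ b : ℝ)
      + ∑ j ∈ Finset.Icc 2 b, c * Real.log (n j : ℝ) * (1 / (Δ (j - 1) : ℝ) - 1 / (Δ j : ℝ))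
      ≤ c * (Real.log ((F : ℝ) + 1) / (Δ 1 : ℝ) + Real.log (n b : ℝ)) := by
  have hsq : 0 < Real.sqrt ((F : ℝ) + 1) := Real.sqrt_pos.mpr (by positivity)
  have hγ0 : 0 < γ := lt_of_lt_of_le (by positivity) hγl
  have hnlb : ∀ j, 1 ≤ j → F + 1 ≤ n j := by
    intro j hj
    induction j, hj using Nat.le_induction with
    | base => simp [hn1]
    | succ k hk ih => rw [hrec k hk]; omega
  have hnpos : ∀ j, 1 ≤ j → (1 : ℝ) ≤ (n j : ℝ) := by
    intro j hj
    have := hnlb j hj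
    exact_mod_cast Nat.one_le_cast.mpr (by omega)
  have hΔ1 : ∀ j, 1 ≤ j → 1 ≤ Δ j := by
    intro j hj
    rw [hΔ j hj]
    refine Nat.one_le_ceil_iff.mpr ?_
    have h1 : (0 : ℝ) < Real.sqrt (n j) := Real.sqrt_pos.mpr (by
      have := hnpos j hj; linarith)
    positivity
  have hmono : ∀ j, 1 ≤ j → Real.log (n j) ≤ Real.log (n (j + 1)) := by
    intro j hj
    apply Real.log_le_log (by have := hnpos j hj; linarith)
    have : n j ≤ n (j + 1) := by rw [hrec j hj]; omega
    exact_mod_cast this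
  -- key identity
  have key : ∀ m, 1 ≤ m →
      c * Real.log (n (m + 1) : ℝ) / (Δ m : ℝ)
        + ∑ j ∈ Finset.Icc 2 m, c * Real.log (n j : ℝ) * (1 / (Δ (j - 1) : ℝ) - 1 / (Δ j : ℝ))
      = c * Real.log (n 1 : ℝ) / (Δ 1 : ℝ)
        + ∑ j ∈ Finset.Icc 1 m,
            c * (Real.log (n (j + 1) : ℝ) - Real.log (n j : ℝ)) / (Δ j : ℝ) := by
    intro m hm
    induction m, hm using Nat.le_induction with
    | base => simp; ring
    | succ k hk ih =>
      rw [Finset.sum_Icc_succ_top (by omega : 2 ≤ k + 1),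
        Finset.sum_Icc_succ_top (by omega : 1 ≤ k + 1)]
      simp only [Nat.add_sub_cancel]
      linear_combination ih
  -- telescoping
  have tel : ∀ m, 1 ≤ m →
      ∑ j ∈ Finset.Icc 1 m, (Real.log (n (j + 1) : ℝ) - Real.log (n j : ℝ))
        = Real.log (n (m + 1) : ℝ) - Real.log (n 1 : ℝ) := by
    intro m hm
    induction m, hm using Nat.le_induction with
    | base => simp
    | succ k hk ih => rw [Finset.sum_Icc_succ_top (by omega : 1 ≤ k + 1), ih]; ring
  -- per-term bound
  have step : ∀ j ∈ Finset.Icc 1 b,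
      c * (Real.log (n (j + 1) : ℝ) - Real.log (n j : ℝ)) / (Δ j : ℝ)
        ≤ c * (Real.log (n (j + 1) : ℝ) - Real.log (n j : ℝ)) := by
    intro j hj
    rw [Finset.mem_Icc] at hj
    have hd : (1 : ℝ) ≤ (Δ j : ℝ) := by exact_mod_cast hΔ1 j hj.1
    have hx : 0 ≤ c * (Real.log (n (j + 1) : ℝ) - Real.log (n j : ℝ)) := by
      have := hmono j hj.1
      nlinarith
    exact div_le_self hx hd
  -- Δ b ≤ F * n b
  have hΔb : Δ b ≤ F * n b := by
    rw [hΔ b hb]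
    apply Nat.ceil_le.mpr
    push_cast
    have hsn : Real.sqrt ((F : ℝ) + 1) ≤ Real.sqrt (n b) := by
      apply Real.sqrt_le_sqrt
      have := hnlb b hb
      exact_mod_cast this
    have hsn0 : 0 < Real.sqrt (n b) := lt_of_lt_of_le hsq hsn
    have h1 : γ ≤ (F : ℝ) * Real.sqrt ((F : ℝ) + 1) := by
      refine hγu.trans ?_
      rw [div_le_iff₀ hsq]
      have : Real.sqrt ((F : ℝ) + 1) * Real.sqrt ((F : ℝ) + 1) = (F : ℝ) + 1 :=
        Real.mul_self_sqrt (by positivity)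
      nlinarith
    have hF0 : (0 : ℝ) ≤ (F : ℝ) := by positivity
    have h1' : γ ≤ (F : ℝ) * Real.sqrt (n b) :=
      le_trans h1 (mul_le_mul_of_nonneg_left hsn hF0)
    have h2 : γ * Real.sqrt (n b) ≤ (F : ℝ) * Real.sqrt (n b) * Real.sqrt (n b) :=
      mul_le_mul_of_nonneg_right h1' (le_of_lt hsn0)
    have h3 : Real.sqrt (n b) * Real.sqrt (n b) = (n b : ℝ) :=
      Real.mul_self_sqrt (by positivity)
    nlinarith
  -- final log bound
  have hlog : Real.log (n (b + 1) : ℝ) - Real.log (n 1 : ℝ) ≤ Real.log (n b : ℝ) := by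
    have hle : n (b + 1) ≤ n 1 * n b := by
      rw [hrec b hb, hn1]
      have := hnlb b hb
      nlinarith [hΔb]
    have h1 : Real.log (n (b + 1) : ℝ) ≤ Real.log ((n 1 : ℝ) * (n b : ℝ)) := by
      apply Real.log_le_log (by have := hnpos (b + 1) (by omega); linarith)
      exact_mod_cast hle
    rw [Real.log_mul (by have := hnpos 1 le_rfl; linarith) (by have := hnpos b hb; linarith)] at h1
    linarith
  rw [key b hb]
  have hsum : ∑ j ∈ Finset.Icc 1 b,
      c * (Real.log (n (j + 1) : ℝ) - Real.log (n j : ℝ)) / (Δ j : ℝ)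
      ≤ c * Real.log (n b : ℝ) := by
    calc ∑ j ∈ Finset.Icc 1 b,
        c * (Real.log (n (j + 1) : ℝ) - Real.log (n j : ℝ)) / (Δ j : ℝ)
        ≤ ∑ j ∈ Finset.Icc 1 b, c * (Real.log (n (j + 1) : ℝ) - Real.log (n j : ℝ)) :=
          Finset.sum_le_sum step
      _ = c * (Real.log (n (b + 1) : ℝ) - Real.log (n 1 : ℝ)) := by
          rw [← Finset.mul_sum, tel b hb]
      _ ≤ c * Real.log (n b : ℝ) := by nlinarith [hlog]
  have hn1' : Real.log (n 1 : ℝ) = Real.log ((F : ℝ) + 1) := by rw [hn1]; push_cast; ring_nf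
  rw [hn1', mul_add, ← mul_div_assoc]
  linarith [hsum]
end
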